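/- arXiv:2504.17151 — 9 statements merged into one kernel-verified Lean document; each statement's English description precedes it below -/
import Mathlib

section
/- Suppose posteriors are given by the RML formula π_A(ω) = (π(ω)/π(A∩P_ω)) · (u(A∩P_ω)/Σ_{P: A∩P≠∅} u(A∩P)) with u(A∩P) = π(P) whenever A∩P = P. If E is a union of blocks of the partition 𝒫, then for every event A ⊇ E and any ω, ω' ∈ E, the ratio π_A(ω)/π_A(ω') equals π(ω)/π(ω'). In particular, π_E is the Bayesian update of π_A conditional on E. -/
open Finset

/-- The RML posterior formula (see the paper, equation for RML updating). -/
noncomputable def rml {Ω ι : Type*} [Fintype Ω] [DecidableEq Ω] [DecidableEq ι]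
    (b : Ω → ι) (π : Ω → ℝ) (u : Finset Ω → ℝ) (A : Finset Ω) (ω : Ω) : ℝ :=
  if ω ∈ A then
    (π ω / ∑ ω' ∈ A.filter (fun x => b x = b ω), π ω') *
      (u (A.filter (fun x => b x = b ω)) /
        ∑ i ∈ A.image b, u (A.filter (fun x => b x = i)))
  else 0

/-- if `E` is a union of blocks, then for every `A ⊇ E` the RML posterior
preserves the prior likelihood ratios on `E`, and `π_E` is the Bayesian update of `π_A`
conditional on `E`. -/
theorem stmt_1 {Ω ι : Type*} [Fintype Ω] [Nonempty Ω] [DecidableEq Ω] [DecidableEq ι]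
    (b : Ω → ι) (π : Ω → ℝ) (hπpos : ∀ ω, 0 < π ω) (hπsum : ∑ ω, π ω = 1)
    (u : Finset Ω → ℝ) (hu : ∀ B : Finset Ω, B.Nonempty → 0 < u B)
    (hufull : ∀ B : Finset Ω, (∃ i : ι, B = Finset.univ.filter (fun x => b x = i)) →
      u B = ∑ ω ∈ B, π ω)
    (E : Finset Ω) (hEne : E.Nonempty)
    (hE : ∀ ω ∈ E, Finset.univ.filter (fun x => b x = b ω) ⊆ E)
    (A : Finset Ω) (hEA : E ⊆ A) :
    (∀ ω ∈ E, ∀ ω' ∈ E, rml b π u A ω / rml b π u A ω' = π ω / π ω') ∧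
    (∀ ω ∈ E, rml b π u E ω = rml b π u A ω / ∑ ω'' ∈ E, rml b π u A ω'') := by
  -- the A-filter of the block of any ω ∈ E is the full block
  have hblock : ∀ S : Finset Ω, E ⊆ S → ∀ ω ∈ E,
      S.filter (fun x => b x = b ω) = Finset.univ.filter (fun x => b x = b ω) := by
    intro S hES ω hω
    apply Finset.Subset.antisymm
    · intro x hx
      rw [Finset.mem_filter] at hx ⊢
      exact ⟨Finset.mem_univ x, hx.2⟩
    · intro x hx
      rw [Finset.mem_filter] at hx ⊢
      exact ⟨hES (hE ω hω (Finset.mem_filter.mpr ⟨Finset.mem_univ x, hx.2⟩)), hx.2⟩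
  have hZ : ∀ S : Finset Ω, S.Nonempty →
      0 < ∑ i ∈ S.image b, u (S.filter (fun x => b x = i)) := by
    intro S hS
    apply Finset.sum_pos
    · intro i hi
      obtain ⟨x, hx, rfl⟩ := Finset.mem_image.mp hi
      exact hu _ ⟨x, Finset.mem_filter.mpr ⟨hx, rfl⟩⟩
    · exact hS.image b
  have hval : ∀ S : Finset Ω, E ⊆ S → ∀ ω ∈ E,
      rml b π u S ω = π ω / ∑ i ∈ S.image b, u (S.filter (fun x => b x = i)) := by
    intro S hES ω hω
    have hωS : ω ∈ S := hES hω
    have hT : (0:ℝ) < ∑ ω' ∈ S.filter (fun x => b x = b ω), π ω' :=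
      Finset.sum_pos (fun x _ => hπpos x) ⟨ω, Finset.mem_filter.mpr ⟨hωS, rfl⟩⟩
    have hu' : u (S.filter (fun x => b x = b ω))
        = ∑ ω' ∈ S.filter (fun x => b x = b ω), π ω' := by
      rw [hblock S hES ω hω]
      exact hufull _ ⟨b ω, rfl⟩
    rw [rml, if_pos hωS, hu', div_mul_div_comm, mul_comm (π ω),
      mul_div_mul_left _ _ hT.ne']
  have hZE : ∑ i ∈ E.image b, u (E.filter (fun x => b x = i)) = ∑ ω' ∈ E, π ω' := by
    rw [← Finset.sum_fiberwise_of_maps_to (fun x hx => Finset.mem_image_of_mem b hx) π]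
    refine Finset.sum_congr rfl ?_
    intro i hi
    obtain ⟨x, hx, rfl⟩ := Finset.mem_image.mp hi
    rw [hblock E (Finset.Subset.refl E) x hx]
    exact hufull _ ⟨b x, rfl⟩
  have hZA := (hZ A ⟨hEne.choose, hEA hEne.choose_spec⟩).ne'
  have hEπ : (0:ℝ) < ∑ ω' ∈ E, π ω' := Finset.sum_pos (fun x _ => hπpos x) hEne
  constructor
  · intro ω hω ω' hω'
    rw [hval A hEA ω hω, hval A hEA ω' hω']
    rw [div_div_div_cancel_right₀ hZA]
  · intro ω hω
    have hsum : ∑ ω'' ∈ E, rml b π u A ω''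
        = (∑ ω'' ∈ E, π ω'') / ∑ i ∈ A.image b, u (A.filter (fun x => b x = i)) := by
      rw [Finset.sum_div]
      exact Finset.sum_congr rfl fun x hx => hval A hEA x hx
    rw [hval E (Finset.Subset.refl E) ω hω, hval A hEA ω hω, hZE, hsum,
      div_div_div_cancel_right₀ hZA]
end

section
/- Let posteriors be given by the RML formula with weight u satisfying u(D) > π(D) for every nonempty proper subset D of a block P ∈ 𝒫 (non-extremeness) and u(P) = π(P) for full blocks. If E ⊊ P for some block P with E nonempty, then E^c is not ideal: specifically, taking A = E^c, for ω ∈ P\E and ω' ∈ P^c (assuming P^c nonempty), π_A(ω)/π_A(ω') > π(ω)/π(ω'). -/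
open Finset

/-- with non-extremeness (`u(D) > π(D)` for nonempty proper subsets of blocks)
and `u(P) = π(P)` for full blocks, if `∅ ≠ E ⊊ P` for a block `P` with `Pᶜ ≠ ∅`, then taking
`A = Eᶜ`, for `ω ∈ P\E` and `ω' ∈ Pᶜ` we get `π_A(ω)/π_A(ω') > π(ω)/π(ω')`, i.e. `Eᶜ` is
not ideal. -/
theorem stmt_2 {Ω ι : Type*} [Fintype Ω] [Nonempty Ω] [DecidableEq Ω] [DecidableEq ι]
    (b : Ω → ι) (π : Ω → ℝ) (hπpos : ∀ ω, 0 < π ω) (hπsum : ∑ ω, π ω = 1)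
    (u : Finset Ω → ℝ) (hu : ∀ B : Finset Ω, B.Nonempty → 0 < u B)
    (hufull : ∀ i : ι,
      u (Finset.univ.filter (fun x => b x = i)) =
        ∑ ω ∈ Finset.univ.filter (fun x => b x = i), π ω)
    (hustrict : ∀ (D : Finset Ω) (i : ι), D.Nonempty →
      D ⊂ Finset.univ.filter (fun x => b x = i) → (∑ ω ∈ D, π ω) < u D)
    (i₀ : ι) (E : Finset Ω) (hEne : E.Nonempty)
    (hE : E ⊂ Finset.univ.filter (fun x => b x = i₀)) :
    ∀ ω ∈ (Finset.univ.filter (fun x => b x = i₀)) \ E, ∀ ω' : Ω, b ω' ≠ i₀ →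
      rml b π u (Finset.univ \ E) ω / rml b π u (Finset.univ \ E) ω' > π ω / π ω' := by
  intro ω hω ω' hω'
  simp only [mem_sdiff, mem_filter, mem_univ, true_and] at hω
  obtain ⟨hbω, hωE⟩ := hω
  set P := Finset.univ.filter (fun x => b x = i₀) with hP
  set A := Finset.univ \ E with hA
  have hEsub : E ⊆ P := hE.1
  have hbE : ∀ x ∈ E, b x = i₀ := by
    intro x hx; have := hEsub hx; simp [hP] at this; exact this
  have hωA : ω ∈ A := by simp [hA, hωE]
  have hω'E : ω' ∉ E := fun h => hω' (hbE ω' h)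
  have hω'A : ω' ∈ A := by simp [hA, hω'E]
  have hfω : A.filter (fun x => b x = b ω) = P \ E := by
    ext x
    simp only [hA, hP, mem_filter, mem_sdiff, mem_univ, true_and, hbω]
    tauto
  have hfω' : A.filter (fun x => b x = b ω') =
      Finset.univ.filter (fun x => b x = b ω') := by
    ext x
    simp only [hA, mem_filter, mem_sdiff, mem_univ, true_and]
    constructor
    · tauto
    · intro hx
      refine ⟨fun hxE => hω' ?_, hx⟩
      rw [← hx]; exact hbE x hxE
  have hPEne : (P \ E).Nonempty := by
    obtain ⟨x, hxP, hxE⟩ := Finset.exists_of_ssubset hE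
    exact ⟨x, by simp [mem_sdiff, hxP, hxE]⟩
  set S := ∑ x ∈ P \ E, π x with hS
  set U := u (P \ E) with hU
  set T := ∑ x ∈ Finset.univ.filter (fun x => b x = b ω'), π x with hT
  set Z := ∑ i ∈ A.image b, u (A.filter (fun x => b x = i)) with hZ
  have hSpos : 0 < S := Finset.sum_pos (fun x _ => hπpos x) hPEne
  have hUS : S < U := hustrict (P \ E) i₀ hPEne (Finset.sdiff_ssubset hEsub hEne)
  have hTpos : 0 < T := Finset.sum_pos (fun x _ => hπpos x)
    ⟨ω', by simp⟩
  have hZpos : 0 < Z := by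
    apply Finset.sum_pos
    · intro i hi
      obtain ⟨x, hxA, hbx⟩ := Finset.mem_image.mp hi
      exact hu _ ⟨x, Finset.mem_filter.mpr ⟨hxA, hbx⟩⟩
    · exact ⟨b ω, Finset.mem_image.mpr ⟨ω, hωA, rfl⟩⟩
  have huT : u (Finset.univ.filter (fun x => b x = b ω')) = T := hufull (b ω')
  have hrω : rml b π u A ω = (π ω / S) * (U / Z) := by
    rw [rml, if_pos hωA, hfω]
  have hrω' : rml b π u A ω' = (π ω' / T) * (T / Z) := by
    rw [rml, if_pos hω'A, hfω', huT]
  rw [hrω, hrω', gt_iff_lt]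
  have hπω := hπpos ω
  have hπω' := hπpos ω'
  have hkey : (π ω / S) * (U / Z) / ((π ω' / T) * (T / Z))
      = (π ω / π ω') * (U / S) := by
    field_simp
  rw [hkey]
  have h1 : (1 : ℝ) < U / S := (one_lt_div hSpos).mpr hUS
  have h2 : 0 < π ω / π ω' := div_pos hπω hπω'
  calc π ω / π ω' = (π ω / π ω') * 1 := by ring
    _ < (π ω / π ω') * (U / S) := by exact mul_lt_mul_of_pos_left h1 h2
end

section
/- Under RML updating, every nonempty proper subset D of a block P ∈ 𝒫 is ideal: for any event A ⊇ D and ω, ω' ∈ D, π_A(ω)/π_A(ω') = π(ω)/π(ω') = π_D(ω)/π_D(ω'). -/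
open Finset

lemma rml_ratio {Ω ι : Type*} [Fintype Ω] [DecidableEq Ω] [DecidableEq ι]
    (b : Ω → ι) (π : Ω → ℝ) (hπpos : ∀ ω, 0 < π ω)
    (u : Finset Ω → ℝ) (hu : ∀ B : Finset Ω, B.Nonempty → 0 < u B)
    (A : Finset Ω) (ω ω' : Ω) (hω : ω ∈ A) (hω' : ω' ∈ A) (hb : b ω = b ω') :
    rml b π u A ω / rml b π u A ω' = π ω / π ω' := by
  have hF : A.filter (fun x => b x = b ω') = A.filter (fun x => b x = b ω) := by
    rw [hb]
  have hS : 0 < ∑ x ∈ A.filter (fun x => b x = b ω), π x :=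
    Finset.sum_pos (fun x _ => hπpos x) ⟨ω, Finset.mem_filter.2 ⟨hω, rfl⟩⟩
  have hU : 0 < u (A.filter (fun x => b x = b ω)) :=
    hu _ ⟨ω, Finset.mem_filter.2 ⟨hω, rfl⟩⟩
  have hT : 0 < ∑ j ∈ A.image b, u (A.filter (fun x => b x = j)) := by
    refine Finset.sum_pos (fun j hj => ?_) ⟨b ω, Finset.mem_image_of_mem b hω⟩
    obtain ⟨x, hx, hxj⟩ := Finset.mem_image.1 hj
    exact hu _ ⟨x, Finset.mem_filter.2 ⟨hx, hxj⟩⟩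
  rw [rml, rml, if_pos hω, if_pos hω', hF]
  field_simp

/-- under RML updating, every nonempty proper subset `D` of a block is ideal:
for any `A ⊇ D` and `ω, ω' ∈ D`, `π_A(ω)/π_A(ω') = π(ω)/π(ω') = π_D(ω)/π_D(ω')`. -/
theorem stmt_6 {Ω ι : Type*} [Fintype Ω] [Nonempty Ω] [DecidableEq Ω] [DecidableEq ι]
    (b : Ω → ι) (π : Ω → ℝ) (hπpos : ∀ ω, 0 < π ω) (hπsum : ∑ ω, π ω = 1)
    (u : Finset Ω → ℝ) (hu : ∀ B : Finset Ω, B.Nonempty → 0 < u B)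
    (i : ι) (D : Finset Ω) (hDne : D.Nonempty)
    (hD : D ⊂ Finset.univ.filter (fun x => b x = i)) :
    ∀ A : Finset Ω, D ⊆ A → ∀ ω ∈ D, ∀ ω' ∈ D,
      rml b π u A ω / rml b π u A ω' = π ω / π ω' ∧
      rml b π u A ω / rml b π u A ω' = rml b π u D ω / rml b π u D ω' := by
  intro A hDA ω hω ω' hω'
  have hb : b ω = b ω' := by
    have h1 := (Finset.mem_filter.1 (hD.subset hω)).2
    have h2 := (Finset.mem_filter.1 (hD.subset hω')).2
    rw [h1, h2]
  have hA := rml_ratio b π hπpos u hu A ω ω' (hDA hω) (hDA hω') hb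
  have hDr := rml_ratio b π hπpos u hu D ω ω' hω hω' hb
  exact ⟨hA, hA.trans hDr.symm⟩
end

section
/- Let 𝒩 be a convex set of probability measures on finite Ω that is 𝒫-rectangular with respect to a partition 𝒫: for any π', π'' ∈ 𝒩 and block P, there exists π''' ∈ 𝒩 agreeing with π' on P and with π'' on P^c. Then for every event A, any π' ∈ 𝒩 maximizing π'(A) over 𝒩 also maximizes π'(A∩P) over 𝒩 for each block P with A∩P ≠ ∅; consequently max_{π'∈𝒩} π'(A) = Σ_{P: A∩P≠∅} max_{π'∈𝒩} π'(A∩P). -/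
open Finset

/-- if a convex set `𝒩` of probability measures (all agreeing on the blocks
of the partition) is `𝒫`-rectangular, then any `p ∈ 𝒩` maximizing `p(A)` over `𝒩` also
maximizes `p(A∩P)` for each block `P` meeting `A`; consequently the maximum of `·(A)` is
the sum over blocks of the maxima of `·(A∩P)`. -/
theorem stmt_8 {Ω ι : Type*} [Fintype Ω] [DecidableEq Ω] [DecidableEq ι]
    (b : Ω → ι) (𝒩 : Set (Ω → ℝ)) (hne : 𝒩.Nonempty)
    (hprob : ∀ p ∈ 𝒩, (∀ ω, 0 ≤ p ω) ∧ ∑ ω, p ω = 1)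
    (hconv : ∀ p ∈ 𝒩, ∀ q ∈ 𝒩, ∀ t : ℝ, 0 ≤ t → t ≤ 1 →
      (fun ω => t * p ω + (1 - t) * q ω) ∈ 𝒩)
    (hagree : ∀ p ∈ 𝒩, ∀ q ∈ 𝒩, ∀ i : ι,
      ∑ ω ∈ Finset.univ.filter (fun x => b x = i), p ω =
        ∑ ω ∈ Finset.univ.filter (fun x => b x = i), q ω)
    (hrect : ∀ p ∈ 𝒩, ∀ q ∈ 𝒩, ∀ i : ι,
      (fun ω => if b ω = i then p ω else q ω) ∈ 𝒩)
    (A : Finset Ω) (p : Ω → ℝ) (hp : p ∈ 𝒩)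
    (hmax : ∀ q ∈ 𝒩, ∑ ω ∈ A, q ω ≤ ∑ ω ∈ A, p ω) :
    (∀ i ∈ A.image b, ∀ q ∈ 𝒩,
      ∑ ω ∈ A.filter (fun x => b x = i), q ω ≤
        ∑ ω ∈ A.filter (fun x => b x = i), p ω) ∧
    ∑ ω ∈ A, p ω = ∑ i ∈ A.image b, ∑ ω ∈ A.filter (fun x => b x = i), p ω := by
  constructor
  · intro i _ q hq
    have hr := hrect q hq p hp i
    have := hmax _ hr
    rw [← Finset.sum_filter_add_sum_filter_not A (fun x => b x = i)] at this
    rw [← Finset.sum_filter_add_sum_filter_not A (fun x => b x = i) p] at this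
    have h1 : ∑ ω ∈ A.filter (fun x => b x = i),
        (fun ω => if b ω = i then q ω else p ω) ω
        = ∑ ω ∈ A.filter (fun x => b x = i), q ω := by
      apply Finset.sum_congr rfl
      intro x hx
      simp only [Finset.mem_filter] at hx
      simp [hx.2]
    have h2 : ∑ ω ∈ A.filter (fun x => ¬ b x = i),
        (fun ω => if b ω = i then q ω else p ω) ω
        = ∑ ω ∈ A.filter (fun x => ¬ b x = i), p ω := by
      apply Finset.sum_congr rfl
      intro x hx
      simp only [Finset.mem_filter] at hx
      simp [hx.2]
    rw [h1, h2] at this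
    linarith
  · exact (Finset.sum_fiberwise_of_maps_to (fun x hx => Finset.mem_image_of_mem b hx) p).symm
end

section
/- In the two-state two-signal model with benchmark prior parameters (η, α) and plausible signal accuracies β ∈ [β̲, β̄] in state s₁ and γ ∈ [γ̲, γ̄] in state s₂, the RML posterior after signal σ₁ is π_{σ₁}(s₁) = ηβ̄/(ηβ̄ + (1−η)(1−γ̲)), and after σ₂ is π_{σ₂}(s₂) = (1−η)γ̄/(η(1−β̲) + (1−η)γ̄). The agent exhibits confirmation bias, i.e., π_{σ₁}(s₁) > π(s₁|σ₁) and π_{σ₂}(s₁) > π(s₁|σ₂) where π(·|·) are Bayesian posteriors with accuracy α, if and only if γ̄/(1−β̲+γ̄) < α < β̄/(1+β̄−γ̲). -/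
/-- in the two-state two-signal model with plausible signal accuracies
`β ∈ [βl, βu]`, `γ ∈ [γl, γu]`, the RML agent exhibits confirmation bias
(`π_{σ₁}(s₁) > π(s₁|σ₁)` and `π_{σ₂}(s₁) > π(s₁|σ₂)`) if and only if
`γu/(1−βl+γu) < α < βu/(1+βu−γl)`. -/
theorem stmt_9 (η α βl βu γl γu : ℝ)
    (hη : η ∈ Set.Ioo (0:ℝ) 1) (hα : α ∈ Set.Ioo (0:ℝ) 1)
    (hβl : 0 < βl) (hβu : βu < 1) (hγl : 0 < γl) (hγu : γu < 1)
    (hαβ : α ∈ Set.Icc βl βu) (hαγ : α ∈ Set.Icc γl γu) :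
    (η * βu / (η * βu + (1 - η) * (1 - γl)) >
        η * α / (η * α + (1 - η) * (1 - α)) ∧
      η * (1 - βl) / (η * (1 - βl) + (1 - η) * γu) >
        η * (1 - α) / (η * (1 - α) + (1 - η) * α)) ↔
    (γu / (1 - βl + γu) < α ∧ α < βu / (1 + βu - γl)) := by
  obtain ⟨hη0, hη1⟩ := hη
  obtain ⟨hα0, hα1⟩ := hα
  obtain ⟨hβl1, hβu0⟩ := hαβ
  obtain ⟨hγl1, hγu0⟩ := hαγ
  have h1η : (0:ℝ) < 1 - η := by linarith
  have hβu' : 0 < βu := lt_of_lt_of_le hα0 hβu0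
  have hγu' : 0 < γu := lt_of_lt_of_le hα0 hγu0
  have hβl' : βl < 1 := lt_of_le_of_lt hβl1 hα1
  have hγl' : γl < 1 := lt_of_le_of_lt hγl1 hα1
  have d1 : 0 < η * βu + (1 - η) * (1 - γl) := by nlinarith
  have d2 : 0 < η * α + (1 - η) * (1 - α) := by nlinarith
  have d3 : 0 < η * (1 - βl) + (1 - η) * γu := by nlinarith
  have d4 : 0 < η * (1 - α) + (1 - η) * α := by nlinarith
  have d5 : 0 < 1 - βl + γu := by linarith
  have d6 : 0 < 1 + βu - γl := by linarith
  have hm : 0 < η * (1 - η) := mul_pos hη0 h1η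
  rw [gt_iff_lt, gt_iff_lt, div_lt_div_iff₀ d2 d1, div_lt_div_iff₀ d4 d3,
    div_lt_iff₀ d5, lt_div_iff₀ d6]
  constructor
  · rintro ⟨h1, h2⟩
    constructor <;> nlinarith
  · rintro ⟨h1, h2⟩
    constructor <;> nlinarith
end

section
/- In the two-state two-signal model with plausible accuracies β ∈ [β̲,β̄], γ ∈ [γ̲,γ̄], if β̄ ≥ 1−γ̲, γ̄ ≥ 1−β̲, and α > max{β̄/(1+β̄−γ̲), γ̄/(1−β̲+γ̄)}, then the RML agent exhibits conservatism: π(s₁) ≤ π_{σ₁}(s₁) < π(s₁|σ₁) and π(s₂) ≤ π_{σ₂}(s₂) < π(s₂|σ₂). -/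
set_option maxHeartbeats 2000000 in
/-- in the two-state two-signal model, if `βu ≥ 1−γl`, `γu ≥ 1−βl`, and
`α > max{βu/(1+βu−γl), γu/(1−βl+γu)}`, the RML agent exhibits conservatism:
`π(s₁) ≤ π_{σ₁}(s₁) < π(s₁|σ₁)` and `π(s₂) ≤ π_{σ₂}(s₂) < π(s₂|σ₂)`. -/
theorem stmt_10 (η α βl βu γl γu : ℝ)
    (hη : 1/2 ≤ η) (hη1 : η < 1) (hα : 1/2 ≤ α) (hα1 : α < 1)
    (hβl : 0 < βl) (hβu : βu < 1) (hγl : 0 < γl) (hγu : γu < 1)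
    (hαβ : α ∈ Set.Icc βl βu) (hαγ : α ∈ Set.Icc γl γu)
    (h1 : 1 - γl ≤ βu) (h2 : 1 - βl ≤ γu)
    (h3 : max (βu / (1 + βu - γl)) (γu / (1 - βl + γu)) < α) :
    (η ≤ η * βu / (η * βu + (1 - η) * (1 - γl)) ∧
      η * βu / (η * βu + (1 - η) * (1 - γl)) <
        η * α / (η * α + (1 - η) * (1 - α))) ∧
    ((1 - η) ≤ (1 - η) * γu / (η * (1 - βl) + (1 - η) * γu) ∧
      (1 - η) * γu / (η * (1 - βl) + (1 - η) * γu) <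
        (1 - η) * α / (η * (1 - α) + (1 - η) * α)) := by
  obtain ⟨hβ1, hβ2⟩ := hαβ
  obtain ⟨hγ1, hγ2⟩ := hαγ
  obtain ⟨h3a, h3b⟩ := max_lt_iff.mp h3
  have hη0 : (0:ℝ) < η := by linarith
  have h1η : (0:ℝ) < 1 - η := by linarith
  have hα0 : (0:ℝ) < α := by linarith
  have hβu0 : (0:ℝ) < βu := by linarith
  have hγu0 : (0:ℝ) < γu := by linarith
  have hγl1 : γl < 1 := by linarith
  have hβl1 : βl < 1 := by linarith
  have hd1 : (0:ℝ) < η * βu + (1 - η) * (1 - γl) := by nlinarith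
  have hd2 : (0:ℝ) < η * α + (1 - η) * (1 - α) := by nlinarith
  have hd3 : (0:ℝ) < η * (1 - βl) + (1 - η) * γu := by nlinarith
  have hd4 : (0:ℝ) < η * (1 - α) + (1 - η) * α := by nlinarith
  have hc1 : (0:ℝ) < 1 + βu - γl := by linarith
  have hc2 : (0:ℝ) < 1 - βl + γu := by linarith
  have k1 : βu < α * (1 + βu - γl) := (div_lt_iff₀ hc1).mp h3a
  have k2 : γu < α * (1 - βl + γu) := (div_lt_iff₀ hc2).mp h3b
  refine ⟨⟨?_, ?_⟩, ?_, ?_⟩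
  · rw [le_div_iff₀ hd1]
    nlinarith [mul_pos hη0 h1η, mul_le_mul_of_nonneg_left h1 (le_of_lt (mul_pos hη0 h1η))]
  · rw [div_lt_div_iff₀ hd1 hd2]
    nlinarith [mul_pos hη0 h1η, mul_lt_mul_of_pos_left k1 (mul_pos hη0 h1η)]
  · rw [le_div_iff₀ hd3]
    nlinarith [mul_pos hη0 h1η, mul_le_mul_of_nonneg_left h2 (le_of_lt (mul_pos hη0 h1η))]
  · rw [div_lt_div_iff₀ hd3 hd4]
    nlinarith [mul_pos hη0 h1η, mul_lt_mul_of_pos_left k2 (mul_pos hη0 h1η)]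
end

section
/- (Chain-coherence implies submodularity of the upper probability within a block) Let 𝒩 be a nonempty set of probability measures on finite Ω and define u(B) = sup_{π'∈𝒩} π'(B). Suppose for every chain B₁ ⊆ B₂ ⊆ B₃ there exists π* ∈ 𝒩 with π*(Bᵢ) = u(Bᵢ) for i = 1,2,3. Then u is submodular on events: for any disjoint D₁, D₂ and any B ⊇ D₁∪D₂ with B\(D₁∪D₂) = C, u(C∪D₁∪D₂) + u(C) ≤ u(C∪D₁) + u(C∪D₂). -/
open Finset

/-- chain-coherence implies submodularity of the upper probability:
if `u` is an upper bound for `𝒩` on all events and is attained simultaneously along any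
chain `B₁ ⊆ B₂ ⊆ B₃` by some element of `𝒩`, then `u` is submodular:
for pairwise disjoint `C, D₁, D₂`, `u(C∪D₁∪D₂) + u(C) ≤ u(C∪D₁) + u(C∪D₂)`. -/
theorem stmt_14 {Ω : Type*} [Fintype Ω] [DecidableEq Ω]
    (𝒩 : Set (Ω → ℝ)) (hne : 𝒩.Nonempty)
    (hprob : ∀ p ∈ 𝒩, (∀ ω, 0 ≤ p ω) ∧ ∑ ω, p ω = 1)
    (u : Finset Ω → ℝ)
    (hub : ∀ p ∈ 𝒩, ∀ B : Finset Ω, ∑ ω ∈ B, p ω ≤ u B)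
    (hchain : ∀ B₁ B₂ B₃ : Finset Ω, B₁ ⊆ B₂ → B₂ ⊆ B₃ →
      ∃ p ∈ 𝒩, (∑ ω ∈ B₁, p ω = u B₁) ∧ (∑ ω ∈ B₂, p ω = u B₂) ∧
        (∑ ω ∈ B₃, p ω = u B₃))
    (C D₁ D₂ : Finset Ω)
    (h12 : Disjoint D₁ D₂) (hC1 : Disjoint C D₁) (hC2 : Disjoint C D₂) :
    u (C ∪ D₁ ∪ D₂) + u C ≤ u (C ∪ D₁) + u (C ∪ D₂) := by
  obtain ⟨p, hp, h1, h2, h3⟩ := hchain C (C ∪ D₁) (C ∪ D₁ ∪ D₂)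
    (subset_union_left) (subset_union_left)
  have hCD2 : Disjoint (C ∪ D₁) D₂ := by
    rw [disjoint_union_left]; exact ⟨hC2, h12⟩
  have e1 : ∑ ω ∈ C ∪ D₁ ∪ D₂, p ω = ∑ ω ∈ C ∪ D₁, p ω + ∑ ω ∈ D₂, p ω :=
    Finset.sum_union hCD2
  have e2 : ∑ ω ∈ C ∪ D₂, p ω = ∑ ω ∈ C, p ω + ∑ ω ∈ D₂, p ω :=
    Finset.sum_union hC2
  have hle : ∑ ω ∈ C ∪ D₂, p ω ≤ u (C ∪ D₂) := hub p hp _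
  nlinarith [hle, e1, e2, h1, h2, h3]
end

section
/- In the base-rate-uncertainty model with plausible base rates θ ∈ [θ̲,θ̄] (when signal matches state) and δ ∈ [δ̲,δ̄] (when it mismatches), RML posteriors are π_{σ₁}(s₁) = θ̄α/(θ̄α + (1−δ̲)(1−α)) and π_{σ₂}(s₂) = (1−θ̲)α/(δ̄(1−α) + (1−θ̲)α). The agent exhibits overconfidence, i.e., π_{σ₁}(s₁) > π(s₁|σ₁) and π_{σ₂}(s₂) > π(s₂|σ₂) relative to the Bayesian posteriors with base rate η, if and only if δ̄/(1−θ̲+δ̄) < η < θ̄/(1+θ̄−δ̲). -/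
private lemma pos_cancel {c x : ℝ} (hc : 0 < c) : 0 < c * x ↔ 0 < x := by
  constructor
  · intro h
    by_contra hx
    push_neg at hx
    nlinarith
  · intro h
    exact mul_pos hc h

/-- in the base-rate-uncertainty model with plausible base rates
`θ ∈ [θl, θu]` and `δ ∈ [δl, δu]`, the RML agent exhibits overconfidence
(`π_{σ₁}(s₁) > π(s₁|σ₁)` and `π_{σ₂}(s₂) > π(s₂|σ₂)`) if and only if
`δu/(1−θl+δu) < η < θu/(1+θu−δl)`. -/
theorem stmt_18 (η α θl θu δl δu : ℝ)
    (hη : η ∈ Set.Ioo (0:ℝ) 1) (hα : α ∈ Set.Ioo (0:ℝ) 1)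
    (hθl : 0 < θl) (hθu : θu < 1) (hδl : 0 < δl) (hδu : δu < 1)
    (hηθ : η ∈ Set.Icc θl θu) (hηδ : η ∈ Set.Icc δl δu) :
    (θu * α / (θu * α + (1 - δl) * (1 - α)) >
        η * α / (η * α + (1 - η) * (1 - α)) ∧
      (1 - θl) * α / (δu * (1 - α) + (1 - θl) * α) >
        (1 - η) * α / (η * (1 - α) + (1 - η) * α)) ↔
    (δu / (1 - θl + δu) < η ∧ η < θu / (1 + θu - δl)) := by
  obtain ⟨hη0, hη1⟩ := hη
  obtain ⟨hα0, hα1⟩ := hα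
  obtain ⟨hθlη, hηθu⟩ := hηθ
  obtain ⟨hδlη, hηδu⟩ := hηδ
  have hαα : 0 < α * (1 - α) := mul_pos hα0 (by linarith)
  have d1 : 0 < η * α + (1 - η) * (1 - α) := by nlinarith
  have d2 : 0 < θu * α + (1 - δl) * (1 - α) := by nlinarith
  have d3 : 0 < η * (1 - α) + (1 - η) * α := by nlinarith
  have d4 : 0 < δu * (1 - α) + (1 - θl) * α := by nlinarith
  have d5 : 0 < 1 - θl + δu := by nlinarith
  have d6 : 0 < 1 + θu - δl := by nlinarith
  rw [gt_iff_lt, gt_iff_lt, div_lt_div_iff₀ d1 d2, div_lt_div_iff₀ d3 d4,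
    div_lt_iff₀ d5, lt_div_iff₀ d6]
  have k1 : θu * α * (η * α + (1 - η) * (1 - α)) -
      η * α * (θu * α + (1 - δl) * (1 - α)) =
      α * (1 - α) * (θu - η * (1 + θu - δl)) := by ring
  have k2 : (1 - θl) * α * (η * (1 - α) + (1 - η) * α) -
      (1 - η) * α * (δu * (1 - α) + (1 - θl) * α) =
      α * (1 - α) * (η * (1 - θl + δu) - δu) := by ring
  constructor
  · rintro ⟨h1, h2⟩
    refine ⟨?_, ?_⟩
    · have := (pos_cancel hαα).mp (by linarith [k2] : 0 < α * (1 - α) * (η * (1 - θl + δu) - δu))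
      linarith
    · have := (pos_cancel hαα).mp (by linarith [k1] : 0 < α * (1 - α) * (θu - η * (1 + θu - δl)))
      linarith
  · rintro ⟨h1, h2⟩
    refine ⟨?_, ?_⟩
    · have := (pos_cancel hαα).mpr (by linarith : 0 < θu - η * (1 + θu - δl))
      linarith
    · have := (pos_cancel hαα).mpr (by linarith : 0 < η * (1 - θl + δu) - δu)
      linarith
end

section
/- (Rearrangement/chain-domination separation) Let K be a finite set of probability vectors on a finite set S, all with the same total mass m, and suppose p is a probability vector on S with mass m such that for every enumeration μ of S there exists q ∈ K with Σ_{i≤j} q(μ(i)) ≥ Σ_{i≤j} p(μ(i)) for all j. Then p lies in the convex hull of K. -/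
open Finset

/-- Auxiliary: a filtered sum over `Fin k` equals a sum over `range (j+1)`. -/
lemma fin_filter_sum_aux {k : ℕ} (G : Fin k → ℝ) (j : Fin k) :
    ∑ i ∈ Finset.univ.filter (fun i => i ≤ j), G i
      = ∑ n ∈ Finset.range (j.val + 1), (if h : n < k then G ⟨n, h⟩ else 0) := by
  refine Finset.sum_nbij' (fun i => (i : ℕ))
    (fun n => if h : n < k then (⟨n, h⟩ : Fin k) else j) ?_ ?_ ?_ ?_ ?_
  · intro i hi
    simp only [Finset.mem_filter, Finset.mem_univ, true_and] at hi
    simp [Nat.lt_succ_iff, Fin.le_def.mp hi]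
  · intro n hn
    simp only [Finset.mem_range, Nat.lt_succ_iff] at hn
    have hnk : n < k := lt_of_le_of_lt hn j.isLt
    simp only [dif_pos hnk, Finset.mem_filter, Finset.mem_univ, true_and, Fin.le_def]
    exact hn
  · intro i hi
    simp [i.isLt]
  · intro n hn
    simp only [Finset.mem_range, Nat.lt_succ_iff] at hn
    have hnk : n < k := lt_of_le_of_lt hn j.isLt
    simp [hnk]
  · intro i hi
    simp [i.isLt]

/-- chain-domination separation: if `p` and all members of the finite set
`K` are nonnegative vectors of common total mass `m > 0`, and for every enumeration of `S`
some `q ∈ K` cumulatively dominates `p` along that order, then `p ∈ co(K)`. -/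
theorem stmt_19 {S : Type*} [Fintype S] [DecidableEq S]
    (m : ℝ) (hm : 0 < m)
    (K : Finset (S → ℝ)) (hK : K.Nonempty)
    (hKmass : ∀ q ∈ K, (∀ s, 0 ≤ q s) ∧ ∑ s, q s = m)
    (p : S → ℝ) (hp : ∀ s, 0 ≤ p s) (hpm : ∑ s, p s = m)
    (hdom : ∀ μ : Fin (Fintype.card S) ≃ S, ∃ q ∈ K,
      ∀ j : Fin (Fintype.card S),
        ∑ i ∈ Finset.univ.filter (fun i => i ≤ j), p (μ i) ≤
          ∑ i ∈ Finset.univ.filter (fun i => i ≤ j), q (μ i)) :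
    p ∈ convexHull ℝ (K : Set (S → ℝ)) := by
  by_contra hnot
  have hclosed : IsClosed (convexHull ℝ (K : Set (S → ℝ))) :=
    K.finite_toSet.isClosed_convexHull (𝕜 := ℝ)
  obtain ⟨f, u, hfp, hfq⟩ :=
    geometric_hahn_banach_point_closed (convex_convexHull ℝ _) hclosed hnot
  -- represent f as a dot product
  set a : S → ℝ := fun s => f (fun j => if s = j then (1 : ℝ) else 0) with ha
  have hrep : ∀ g : S → ℝ, f g = ∑ s, g s * a s := by
    intro g
    conv_lhs => rw [pi_eq_sum_univ g]
    rw [map_sum]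
    refine Finset.sum_congr rfl fun s _ => ?_
    rw [f.map_smul, smul_eq_mul]
  -- S is nonempty
  have hk : 0 < Fintype.card S := by
    rcases Nat.eq_zero_or_pos (Fintype.card S) with h | h
    · have : IsEmpty S := Fintype.card_eq_zero_iff.mp h
      rw [Finset.univ_eq_empty, Finset.sum_empty] at hpm
      linarith
    · exact h
  set k := Fintype.card S with hkdef
  -- sorting enumeration
  set e : Fin k ≃ S := (Fintype.equivFin S).symm with he
  set g : Fin k → ℝ := fun i => a (e i) with hg
  set σ := Tuple.sort g with hσ
  have hmono : Monotone (g ∘ σ) := Tuple.monotone_sort g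
  set μ : Fin k ≃ S := σ.trans e with hμ
  obtain ⟨q, hqK, hqdom⟩ := hdom μ
  -- natural-number versions
  set cc : ℕ → ℝ := fun n => if h : n < k then -(a (μ ⟨n, h⟩)) else 0 with hcc
  set dd : ℕ → ℝ := fun n => if h : n < k then q (μ ⟨n, h⟩) - p (μ ⟨n, h⟩) else 0 with hdd
  -- cc is antitone below k
  have hccanti : ∀ i j : ℕ, i ≤ j → j < k → cc j ≤ cc i := by
    intro i j hij hjk
    have hik : i < k := lt_of_le_of_lt hij hjk
    have := hmono (a := (⟨i, hik⟩ : Fin k)) (b := ⟨j, hjk⟩) hij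
    simp only [Function.comp_apply, hg] at this
    simp only [hcc, dif_pos hik, dif_pos hjk]
    have hμi : ∀ (n : ℕ) (hn : n < k), μ ⟨n, hn⟩ = e (σ ⟨n, hn⟩) := fun n hn => rfl
    rw [hμi i hik, hμi j hjk]
    linarith
  -- partial sums of dd are nonnegative
  have hD : ∀ i : ℕ, i < k → 0 ≤ ∑ n ∈ Finset.range (i + 1), dd n := by
    intro i hik
    have hj := hqdom ⟨i, hik⟩
    rw [fin_filter_sum_aux (fun x => p (μ x)) ⟨i, hik⟩,
        fin_filter_sum_aux (fun x => q (μ x)) ⟨i, hik⟩] at hj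
    have : ∑ n ∈ Finset.range (i + 1), dd n
        = (∑ n ∈ Finset.range (i + 1), (if h : n < k then q (μ ⟨n, h⟩) else 0))
          - ∑ n ∈ Finset.range (i + 1), (if h : n < k then p (μ ⟨n, h⟩) else 0) := by
      rw [← Finset.sum_sub_distrib]
      refine Finset.sum_congr rfl fun n hn => ?_
      by_cases h : n < k <;> simp [hdd, h]
    rw [this]
    simpa using sub_nonneg.mpr hj
  -- total sum of dd is zero
  have hDk : ∑ n ∈ Finset.range k, dd n = 0 := by
    have h1 : ∑ n ∈ Finset.range k, dd n
        = ∑ i : Fin k, (q (μ i) - p (μ i)) := by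
      rw [← Fin.sum_univ_eq_sum_range dd k]
      refine Finset.sum_congr rfl fun i _ => ?_
      simp [hdd, i.isLt]
    rw [h1, Finset.sum_sub_distrib, Equiv.sum_comp μ q, Equiv.sum_comp μ p,
      (hKmass q hqK).2, hpm, sub_self]
  -- Abel summation
  have habel := Finset.sum_range_by_parts cc dd k
  have hterm : ∀ i ∈ Finset.range (k - 1),
      (cc (i + 1) - cc i) • (∑ n ∈ Finset.range (i + 1), dd n) ≤ 0 := by
    intro i hi
    rw [Finset.mem_range] at hi
    have hik : i + 1 < k := by omega
    have h1 : cc (i + 1) - cc i ≤ 0 :=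
      sub_nonpos.mpr (hccanti i (i + 1) (Nat.le_succ i) hik)
    have h2 : 0 ≤ ∑ n ∈ Finset.range (i + 1), dd n := hD i (by omega)
    exact mul_nonpos_of_nonpos_of_nonneg h1 h2
  have hsum_nonneg : 0 ≤ ∑ n ∈ Finset.range k, cc n • dd n := by
    rw [habel, hDk, smul_zero, zero_sub]
    have := Finset.sum_nonpos hterm
    linarith
  -- translate back
  have hq' : q ∈ convexHull ℝ (K : Set (S → ℝ)) :=
    subset_convexHull ℝ _ (by exact_mod_cast hqK)
  have hlt : f p < f q := lt_trans hfp (hfq q hq')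
  rw [hrep p, hrep q] at hlt
  have hsum_eq : ∑ n ∈ Finset.range k, cc n • dd n
      = ∑ s, p s * a s - ∑ s, q s * a s := by
    have h1 : ∑ n ∈ Finset.range k, cc n • dd n
        = ∑ i : Fin k, (-(a (μ i)) * (q (μ i) - p (μ i))) := by
      rw [← Fin.sum_univ_eq_sum_range (fun n => cc n • dd n) k]
      refine Finset.sum_congr rfl fun i _ => ?_
      simp [hcc, hdd, i.isLt, smul_eq_mul]
    rw [h1]
    have h2 : ∀ i : Fin k, (-(a (μ i)) * (q (μ i) - p (μ i)))
        = p (μ i) * a (μ i) - q (μ i) * a (μ i) := fun i => by ring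
    rw [Finset.sum_congr rfl fun i _ => h2 i, Finset.sum_sub_distrib,
      Equiv.sum_comp μ (fun s => p s * a s), Equiv.sum_comp μ (fun s => q s * a s)]
  rw [hsum_eq] at hsum_nonneg
  linarith
end
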